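/- arXiv:1707.07593 — 12 statements merged into one kernel-verified Lean document; each statement's English description precedes it below -/
import Mathlib

section
/- Let X be a Polish space and b : ℕ → Set X a basic open enumeration of X. Then the set U := {(α, x) ∈ 𝒩 × X | ∃ n, x ∈ b (α n)} is open in 𝒩 × X, and for every subset A of X: A is open if and only if there exists α ∈ 𝒩 such that A = U_b(α), i.e. U is a universal set for the open subsets of X. -/
open Set

theorem universal_open_set
    {X : Type*} [TopologicalSpace X] [PolishSpace X]
    (b : ℕ → Set X)
    (hopen : ∀ s, IsOpen (b s))
    (hbasis : TopologicalSpace.IsTopologicalBasis (Set.range b))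
    (hempty : (∅ : Set X) ∈ Set.range b) :
    IsOpen {p : (ℕ → ℕ) × X | ∃ n, p.2 ∈ b (p.1 n)} ∧
      ∀ A : Set X, IsOpen A ↔ ∃ α : ℕ → ℕ, A = ⋃ n, b (α n) := by
  classical
  obtain ⟨e, he⟩ := hempty
  constructor
  · have h : {p : (ℕ → ℕ) × X | ∃ n, p.2 ∈ b (p.1 n)} =
      ⋃ n, ⋃ k, {α : ℕ → ℕ | α n = k} ×ˢ b k := by
      ext ⟨α, x⟩
      simp only [Set.mem_setOf_eq, Set.mem_iUnion, Set.mem_prod]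
      constructor
      · rintro ⟨n, hx⟩; exact ⟨n, α n, rfl, hx⟩
      · rintro ⟨n, k, hk, hx⟩; exact ⟨n, hk ▸ hx⟩
    rw [h]
    refine isOpen_iUnion fun n => isOpen_iUnion fun k =>
      IsOpen.prod ?_ (hopen k)
    exact (isOpen_discrete ({k} : Set ℕ)).preimage (continuous_apply (A := fun _ : ℕ => ℕ) n)
  · intro A
    constructor
    · intro hA
      refine ⟨fun n => if b n ⊆ A then n else e, ?_⟩
      ext x
      simp only [mem_iUnion]
      constructor
      · intro hx
        obtain ⟨U, ⟨s, rfl⟩, hxU, hUA⟩ := hbasis.exists_subset_of_mem_open hx hA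
        exact ⟨s, by simp [if_pos hUA, hxU]⟩
      · rintro ⟨n, hn⟩
        by_cases hsub : b n ⊆ A
        · exact hsub (by simpa [if_pos hsub] using hn)
        · simp [if_neg hsub, he] at hn
    · rintro ⟨α, rfl⟩; exact isOpen_iUnion fun n => hopen (α n)
end

section
/- Let X be a Polish space and b : ℕ → Set X a basic open enumeration of X. For every open set V ⊆ 𝒩 × X there exists a continuous function u : 𝒩 → 𝒩 such that for all α ∈ 𝒩 the section V_α = {x ∈ X | (α, x) ∈ V} equals U_b(u α). -/
open Set

theorem continuous_section_coding
    {X : Type*} [TopologicalSpace X] [PolishSpace X]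
    (b : ℕ → Set X)
    (hopen : ∀ s, IsOpen (b s))
    (hbasis : TopologicalSpace.IsTopologicalBasis (Set.range b))
    (hempty : (∅ : Set X) ∈ Set.range b)
    (V : Set ((ℕ → ℕ) × X)) (hV : IsOpen V) :
    ∃ u : (ℕ → ℕ) → (ℕ → ℕ), Continuous u ∧
      ∀ α : ℕ → ℕ, {x : X | (α, x) ∈ V} = ⋃ n, b (u α n) := by
  classical
  obtain ⟨e, he⟩ := hempty
  set cyl : List ℕ → Set (ℕ → ℕ) :=
    fun s => Set.pi ↑(Finset.range s.length) (fun i => {s.getD i 0}) with hcyl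
  have cylopen : ∀ s, IsOpen (cyl s) := fun s =>
    isOpen_set_pi (Finset.range s.length).finite_toSet (fun i _ => isOpen_discrete _)
  have cylclosed : ∀ s, IsClosed (cyl s) := fun s =>
    isClosed_set_pi (fun i _ => isClosed_discrete _)
  set d : ℕ → List ℕ × ℕ := fun k => Denumerable.ofNat (List ℕ × ℕ) k with hd
  set u : (ℕ → ℕ) → ℕ → ℕ := fun α k =>
    if α ∈ cyl (d k).1 ∧ (cyl (d k).1 ×ˢ b (d k).2 ⊆ V) then (d k).2 else e with hu
  refine ⟨u, ?_, ?_⟩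
  · apply continuous_pi
    intro k
    apply IsLocallyConstant.continuous
    intro t
    by_cases hQ : cyl (d k).1 ×ˢ b (d k).2 ⊆ V
    · by_cases h1 : (d k).2 ∈ t <;> by_cases h2 : e ∈ t
      · have : (fun α => u α k) ⁻¹' t = univ := by
          ext α; by_cases hα : α ∈ cyl (d k).1 <;> simp [u, hQ, hα, h1, h2]
        rw [this]; exact isOpen_univ
      · have : (fun α => u α k) ⁻¹' t = cyl (d k).1 := by
          ext α; by_cases hα : α ∈ cyl (d k).1 <;> simp [u, hQ, hα, h1, h2]
        rw [this]; exact cylopen _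
      · have : (fun α => u α k) ⁻¹' t = (cyl (d k).1)ᶜ := by
          ext α; by_cases hα : α ∈ cyl (d k).1 <;> simp [u, hQ, hα, h1, h2]
        rw [this]; exact (cylclosed _).isOpen_compl
      · have : (fun α => u α k) ⁻¹' t = ∅ := by
          ext α; by_cases hα : α ∈ cyl (d k).1 <;> simp [u, hQ, hα, h1, h2]
        rw [this]; exact isOpen_empty
    · by_cases h2 : e ∈ t
      · have : (fun α => u α k) ⁻¹' t = univ := by
          ext α; simp [u, hQ, h2]
        rw [this]; exact isOpen_univ
      · have : (fun α => u α k) ⁻¹' t = ∅ := by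
          ext α; simp [u, hQ, h2]
        rw [this]; exact isOpen_empty
  · intro α
    ext x
    simp only [mem_setOf_eq, mem_iUnion]
    constructor
    · intro hx
      obtain ⟨A, B, hA, hB, hαA, hxB, hAB⟩ := isOpen_prod_iff.mp hV α x hx
      obtain ⟨I, f, hf, hsub⟩ := isOpen_pi_iff.mp hA α hαA
      set m : ℕ := I.sup id + 1 with hm
      set s0 : List ℕ := List.ofFn (fun i : Fin m => α i) with hs0
      have hlen : s0.length = m := by simp [s0, hm]
      have hgetD : ∀ i, i < m → s0.getD i 0 = α i := by
        intro i hi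
        have hi' : i < s0.length := by omega
        rw [List.getD_eq_getElem _ _ hi']
        simp only [hs0]
        rw [List.getElem_ofFn]
      have hαcyl : α ∈ cyl s0 := by
        intro i hi
        simp only [Finset.coe_range, Set.mem_Iio, hlen] at hi
        exact Set.mem_singleton_iff.mpr (hgetD i hi).symm
      have hcylA : cyl s0 ⊆ A := by
        intro β hβ
        apply hsub
        intro i hi
        have him : (i : ℕ) < m := by
          have h' : i ≤ I.sup id := Finset.le_sup (f := id) hi
          omega
        have hβi : β i = α i := by
          have h2 := hβ i (by simpa [hlen] using Set.mem_Iio.mpr him)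
          rw [Set.mem_singleton_iff] at h2
          rw [h2, hgetD i him]
        rw [hβi]
        exact (hf i hi).2
      obtain ⟨t, ⟨n, rfl⟩, hxn, htB⟩ := hbasis.exists_subset_of_mem_open hxB hB
      have hsubV : cyl s0 ×ˢ b n ⊆ V := fun p hp =>
        hAB ⟨hcylA hp.1, htB hp.2⟩
      refine ⟨Encodable.encode (s0, n), ?_⟩
      have hdk : d (Encodable.encode (s0, n)) = (s0, n) := Denumerable.ofNat_encode _
      have : u α (Encodable.encode (s0, n)) = n := by
        rw [hu]
        simp only [hdk]
        rw [if_pos ⟨hαcyl, hsubV⟩]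
      rw [this]
      exact hxn
    · rintro ⟨k, hxk⟩
      by_cases hc : α ∈ cyl (d k).1 ∧ (cyl (d k).1 ×ˢ b (d k).2 ⊆ V)
      · have : u α k = (d k).2 := by rw [hu]; exact if_pos hc
        rw [this] at hxk
        exact hc.2 ⟨hc.1, hxk⟩
      · have : u α k = e := by rw [hu]; exact if_neg hc
        rw [this] at hxk
        rw [he] at hxk
        exact absurd hxk (notMem_empty x)
end

section
/- Let X be a Polish space and b : ℕ → Set X a basic open enumeration of X. If G ⊆ 𝒩 × X has the Baire property, then there exists a continuous function u : 𝒩 → 𝒩 such that the set {α ∈ 𝒩 | the symmetric difference G_α Δ U_b(u α) is meager} is comeager in 𝒩 (i.e. for almost all α the symmetric difference of the section G_α with the open set coded by u α is meager). -/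
open Set
open scoped symmDiff

open TopologicalSpace

/-- Cylinder coded by a list. -/
def listCyl (l : List ℕ) : Set (ℕ → ℕ) :=
  PiNat.cylinder (fun i => l.getD i 0) l.length

lemma isOpen_listCyl (l : List ℕ) : IsOpen (listCyl l) :=
  PiNat.isOpen_cylinder (E := fun _ => ℕ) _ _

lemma isClosed_listCyl (l : List ℕ) : IsClosed (listCyl l) := by
  rw [listCyl, PiNat.cylinder_eq_pi]
  exact isClosed_set_pi fun i _ => isClosed_singleton

lemma cylinder_eq_listCyl (x : ℕ → ℕ) (n : ℕ) :
    PiNat.cylinder x n = listCyl ((List.range n).map x) := by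
  ext y
  simp only [listCyl, PiNat.mem_cylinder_iff, List.length_map, List.length_range]
  refine forall_congr' fun i => imp_congr_right fun hi => ?_
  rw [List.getD_eq_getElem _ _ (by simpa using hi)]
  simp

/-- Sections of a dense open subset of `𝒩 × X` are dense, for comeagerly many parameters. -/
lemma section_dense_open_residual {X : Type*} [TopologicalSpace X]
    (b : ℕ → Set X) (hopen : ∀ s, IsOpen (b s))
    (hbasis : IsTopologicalBasis (Set.range b))
    (U : Set ((ℕ → ℕ) × X)) (hUo : IsOpen U) (hUd : Dense U) :
    {α : ℕ → ℕ | Dense {x | (α, x) ∈ U}} ∈ residual (ℕ → ℕ) := by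
  have key : ∀ s : ℕ,
      {α : ℕ → ℕ | (b s).Nonempty → ∃ x ∈ b s, (α, x) ∈ U} ∈ residual (ℕ → ℕ) := by
    intro s
    by_cases hs : (b s).Nonempty
    · refine Filter.mem_of_superset
        (residual_of_dense_open (s := Prod.fst '' (U ∩ univ ×ˢ b s)) ?_ ?_) ?_
      · exact isOpenMap_fst _ (hUo.inter (isOpen_univ.prod (hopen s)))
      · rw [dense_iff_inter_open]
        intro V hV hVne
        obtain ⟨α, hα⟩ := hVne
        have hVW : IsOpen (V ×ˢ b s) := hV.prod (hopen s)
        have hVWne : (V ×ˢ b s).Nonempty := ⟨(α, hs.choose), hα, hs.choose_spec⟩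
        obtain ⟨p, hpU, hpVW⟩ := hUd.exists_mem_open hVW hVWne
        exact ⟨p.1, hpVW.1, p, ⟨hpU, trivial, hpVW.2⟩, rfl⟩
      · rintro α ⟨p, ⟨hpU, -, hpb⟩, rfl⟩ -
        exact ⟨p.2, hpb, hpU⟩
    · exact Filter.mem_of_superset Filter.univ_mem fun α _ h => absurd h hs
  refine Filter.mem_of_superset (countable_iInter_mem.2 key) ?_
  intro α hα
  rw [mem_setOf_eq, hbasis.dense_iff]
  rintro o ⟨s, rfl⟩ hne
  obtain ⟨x, hxb, hxU⟩ := (mem_iInter.1 hα s) hne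
  exact ⟨x, hxb, hxU⟩

/-- One direction of Kuratowski–Ulam for `𝒩 × X`. -/
lemma meagre_section_residual {X : Type*} [TopologicalSpace X]
    (b : ℕ → Set X) (hopen : ∀ s, IsOpen (b s))
    (hbasis : IsTopologicalBasis (Set.range b))
    (A : Set ((ℕ → ℕ) × X)) (hA : IsMeagre A) :
    {α : ℕ → ℕ | IsMeagre {x | (α, x) ∈ A}} ∈ residual (ℕ → ℕ) := by
  obtain ⟨S, hSo, hSd, hSc, hSsub⟩ := mem_residual_iff.1 hA
  have hT : (⋂ U ∈ S, {α : ℕ → ℕ | Dense {x | (α, x) ∈ U}}) ∈ residual (ℕ → ℕ) :=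
    (countable_bInter_mem hSc).2 fun U hU =>
      section_dense_open_residual b hopen hbasis U (hSo U hU) (hSd U hU)
  refine Filter.mem_of_superset hT ?_
  intro α hα
  simp only [mem_iInter, mem_setOf_eq] at hα
  rw [mem_setOf_eq, isMeagre_iff_countable_union_isNowhereDense]
  refine ⟨(fun U => {x : X | (α, x) ∈ U}ᶜ) '' S, ?_, hSc.image _, ?_⟩
  · rintro t ⟨U, hU, rfl⟩
    have hsec : IsOpen {x : X | (α, x) ∈ U} :=
      (hSo U hU).preimage (Continuous.prodMk_right α)
    rw [(isClosed_compl_iff.2 hsec).isNowhereDense_iff,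
      interior_eq_empty_iff_dense_compl, compl_compl]
    exact hα U hU
  · intro x hx
    by_cases hmem : (α, x) ∈ ⋂₀ S
    · exact absurd hmem fun h => (hSsub h) hx
    · obtain ⟨U, hU, hxU⟩ := by
        simpa only [mem_sInter, not_forall] using hmem
      exact ⟨{x : X | (α, x) ∈ U}ᶜ, ⟨U, hU, rfl⟩, hxU⟩

theorem baire_property_almost_uniformly
    {X : Type*} [TopologicalSpace X] [PolishSpace X]
    (b : ℕ → Set X)
    (hopen : ∀ s, IsOpen (b s))
    (hbasis : TopologicalSpace.IsTopologicalBasis (Set.range b))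
    (hempty : (∅ : Set X) ∈ Set.range b)
    (G : Set ((ℕ → ℕ) × X))
    (hG : ∃ O : Set ((ℕ → ℕ) × X), IsOpen O ∧ IsMeagre (G ∆ O)) :
    ∃ u : (ℕ → ℕ) → (ℕ → ℕ), Continuous u ∧
      {α : ℕ → ℕ | IsMeagre ({x : X | (α, x) ∈ G} ∆ (⋃ n, b (u α n)))}
        ∈ residual (ℕ → ℕ) := by
  classical
  obtain ⟨O, hOo, hOm⟩ := hG
  obtain ⟨t₀, ht₀⟩ := hempty
  -- the coding function
  set u : (ℕ → ℕ) → ℕ → ℕ := fun α n =>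
    match (Encodable.decode n : Option (List ℕ × ℕ)) with
    | none => t₀
    | some p => if listCyl p.1 ×ˢ b p.2 ⊆ O ∧ α ∈ listCyl p.1 then p.2 else t₀
    with hu
  have hunone : ∀ (α : ℕ → ℕ) (n : ℕ),
      (Encodable.decode n : Option (List ℕ × ℕ)) = none → u α n = t₀ := by
    intro α n hd
    simp only [hu]
    rw [hd]
  have husome : ∀ (α : ℕ → ℕ) (n : ℕ) (p : List ℕ × ℕ),
      (Encodable.decode n : Option (List ℕ × ℕ)) = some p →
      u α n = if listCyl p.1 ×ˢ b p.2 ⊆ O ∧ α ∈ listCyl p.1 then p.2 else t₀ := by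
    intro α n p hd
    simp only [hu]
    rw [hd]
  have hcont : Continuous u := by
    refine continuous_pi fun n => ?_
    refine IsLocallyConstant.continuous ?_
    rw [IsLocallyConstant.iff_exists_open]
    intro α
    cases hd : (Encodable.decode n : Option (List ℕ × ℕ)) with
    | none =>
      exact ⟨univ, isOpen_univ, trivial, fun β _ => by
        rw [hunone β n hd, hunone α n hd]⟩
    | some p =>
      by_cases hα : α ∈ listCyl p.1
      · exact ⟨listCyl p.1, isOpen_listCyl p.1, hα, fun β hβ => by
          rw [husome β n p hd, husome α n p hd]
          by_cases hsub : listCyl p.1 ×ˢ b p.2 ⊆ O <;> simp [hsub, hα, hβ]⟩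
      · exact ⟨(listCyl p.1)ᶜ, (isClosed_listCyl p.1).isOpen_compl, hα, fun β hβ => by
          have hβ' : β ∉ listCyl p.1 := hβ
          rw [husome β n p hd, husome α n p hd]
          simp [hα, hβ']⟩
  -- sections of O are exactly the coded open sets
  have hsec : ∀ α : ℕ → ℕ, (⋃ n, b (u α n)) = {x : X | (α, x) ∈ O} := by
    intro α
    apply Subset.antisymm
    · refine iUnion_subset fun n x hx => ?_
      cases hd : (Encodable.decode n : Option (List ℕ × ℕ)) with
      | none =>
        rw [hunone α n hd, ht₀] at hx
        exact absurd hx (notMem_empty x)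
      | some p =>
        rw [husome α n p hd] at hx
        by_cases hc : listCyl p.1 ×ˢ b p.2 ⊆ O ∧ α ∈ listCyl p.1
        · rw [if_pos hc] at hx
          exact hc.1 ⟨hc.2, hx⟩
        · rw [if_neg hc, ht₀] at hx
          exact absurd hx (notMem_empty x)
    · intro x hx
      have hbprod : IsTopologicalBasis
          (image2 (· ×ˢ ·)
            {s : Set (ℕ → ℕ) | ∃ (y : ℕ → ℕ) (n : ℕ), s = PiNat.cylinder y n}
            (Set.range b)) :=
        (PiNat.isTopologicalBasis_cylinders (fun _ => ℕ)).prod hbasis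
      obtain ⟨v, ⟨V, ⟨y, m, rfl⟩, W, ⟨t, rfl⟩, rfl⟩, hxv, hvO⟩ :=
        hbprod.exists_subset_of_mem_open hx hOo
      set l : List ℕ := (List.range m).map y with hl
      have hcyl : PiNat.cylinder y m = listCyl l := cylinder_eq_listCyl y m
      have hcond : listCyl l ×ˢ b t ⊆ O ∧ α ∈ listCyl l := by
        constructor
        · rw [← hcyl]; exact hvO
        · rw [← hcyl]; exact hxv.1
      refine mem_iUnion.2 ⟨Encodable.encode (l, t), ?_⟩
      rw [husome α _ (l, t) (Encodable.encodek (l, t)), if_pos hcond]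
      exact hxv.2
  refine ⟨u, hcont, ?_⟩
  refine Filter.mem_of_superset
    (meagre_section_residual b hopen hbasis (G ∆ O) hOm) ?_
  intro α hα
  rw [mem_setOf_eq, hsec α]
  rw [mem_setOf_eq] at hα
  refine hα.mono fun x hx => ?_
  have hx' := mem_symmDiff.1 hx
  show (α, x) ∈ G ∆ O
  rw [mem_symmDiff]
  exact hx'
end

section
/- Let X be a Polish space and b : ℕ → Set X a basic open enumeration of X. If G ⊆ 𝒩 × X is an analytic set, then there exists a continuous function u : 𝒩 → 𝒩 such that the set {α ∈ 𝒩 | the symmetric difference G_α Δ U_b(u α) is meager} is comeager in 𝒩. -/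
open Set MeasureTheory
open scoped symmDiff

section KUAux
open Topology Filter

/-- A set is eventually equal to another w.r.t. residual iff symm diff is meager. -/
lemma KU.eventuallyEq_iff_isMeagre_symmDiff {α : Type*} [TopologicalSpace α] {s t : Set α} :
    s =ᶠ[residual α] t ↔ IsMeagre (s ∆ t) := by
  rw [eventuallyEq_set, IsMeagre]
  have : (s ∆ t)ᶜ = {x | x ∈ s ↔ x ∈ t} := by
    ext x
    simp only [mem_compl_iff, Set.mem_symmDiff, mem_setOf_eq]
    tauto
  rw [this]
  rfl

/-- Kuratowski–Ulam, one direction: sections of a meager set are meager on a residual set. -/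
lemma KU.sections_meagre {α β : Type*} [TopologicalSpace α] [TopologicalSpace β]
    [SecondCountableTopology β] {S : Set (α × β)} (hS : IsMeagre S) :
    {a | IsMeagre {x | (a, x) ∈ S}} ∈ residual α := by
  -- reduce to closed nowhere dense sets
  obtain ⟨T, hTnd, hTc, hTsub⟩ := isMeagre_iff_countable_union_isNowhereDense.1 hS
  -- for each t ∈ T, the set of a such that (closure t)_a is nowhere dense is residual
  have key : ∀ t : Set (α × β), IsNowhereDense t →
      {a | IsNowhereDense {x | (a, x) ∈ closure t}} ∈ residual α := by
    intro t ht
    set F := closure t with hF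
    have hFc : IsClosed F := isClosed_closure
    have hFnd : IsNowhereDense F := ht.closure
    have hU : IsOpen Fᶜ ∧ Dense Fᶜ := isClosed_isNowhereDense_iff_compl.1 ⟨hFc, hFnd⟩
    -- for each nonempty basic open V of β, {a | ∃ x ∈ V, (a,x) ∉ F} is dense open
    set B := TopologicalSpace.countableBasis β with hB
    have hBbasis := TopologicalSpace.isBasis_countableBasis β
    have hBc : B.Countable := TopologicalSpace.countable_countableBasis β
    set W : Set β → Set α := fun V => ⋃ x ∈ V, (fun a => (a, x)) ⁻¹' Fᶜ with hW
    have hWres : ∀ V ∈ B, V.Nonempty → W V ∈ residual α := by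
      intro V hV hVne
      apply residual_of_dense_open
      · exact isOpen_biUnion fun x _ => hU.1.preimage (continuous_id.prodMk continuous_const)
      · rw [dense_iff_inter_open]
        intro O hO hOne
        have : (O ×ˢ V).Nonempty := hOne.prod hVne
        obtain ⟨p, hp1, hp2⟩ := hU.2.inter_open_nonempty _ (hO.prod (hBbasis.isOpen hV)) this
        exact ⟨p.1, hp1.1, mem_biUnion hp1.2 hp2⟩
    have hres : (⋂ V ∈ {V ∈ B | V.Nonempty}, W V) ∈ residual α := by
      rw [(countable_bInter_mem (hBc.mono (sep_subset _ _)))]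
      exact fun V hV => hWres V hV.1 hV.2
    refine mem_of_superset hres ?_
    intro a ha
    have hdense : Dense {x | (a, x) ∈ F}ᶜ := by
      rw [hBbasis.dense_iff]
      intro V hV hVne
      have := mem_iInter₂.1 ha V ⟨hV, hVne⟩
      obtain ⟨x, hx, hxF⟩ := mem_iUnion₂.1 this
      exact ⟨x, hx, hxF⟩
    have hclosed : IsClosed {x | (a, x) ∈ F} :=
      hFc.preimage (continuous_const.prodMk continuous_id)
    exact (isClosed_isNowhereDense_iff_compl.2 ⟨hclosed.isOpen_compl, hdense⟩).2
  have hres : (⋂ t ∈ T, {a | IsNowhereDense {x | (a, x) ∈ closure t}}) ∈ residual α := by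
    rw [countable_bInter_mem hTc]
    exact fun t ht => key t (hTnd t ht)
  refine mem_of_superset hres ?_
  intro a ha
  simp only [mem_setOf_eq]
  rw [isMeagre_iff_countable_union_isNowhereDense]
  refine ⟨(fun t => {x | (a, x) ∈ closure t}) '' T, ?_, hTc.image _, ?_⟩
  · rintro _ ⟨t, ht, rfl⟩
    exact mem_iInter₂.1 ha t ht
  · intro x hx
    obtain ⟨t, ht, hxt⟩ := hTsub hx
    exact ⟨_, ⟨t, ht, rfl⟩, subset_closure hxt⟩

/-- Baire hull of a set: a Baire measurable superset inside the closure such that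
any Baire measurable subset of the difference is meager. -/
lemma KU.exists_baire_hull {Y : Type*} [TopologicalSpace Y] [SecondCountableTopology Y]
    (A : Set Y) :
    ∃ H : Set Y, BaireMeasurableSet H ∧ A ⊆ H ∧ H ⊆ closure A ∧
      ∀ Z : Set Y, BaireMeasurableSet Z → Z ⊆ H \ A → IsMeagre Z := by
  classical
  set 𝒱 : Set (Set Y) := {V | IsOpen V ∧ IsMeagre (V ∩ A)} with h𝒱
  set U : Set Y := ⋃₀ 𝒱 with hUdef
  have hUo : IsOpen U := isOpen_sUnion fun V hV => hV.1
  have hUA : IsMeagre (U ∩ A) := by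
    obtain ⟨T, hTc, hTsub, hTU⟩ :=
      TopologicalSpace.isOpen_sUnion_countable 𝒱 (fun V hV => hV.1)
    have : U ∩ A ⊆ ⋃ V ∈ T, (V ∩ A) := by
      rw [hUdef, ← hTU]
      rintro x ⟨hx, hxA⟩
      obtain ⟨V, hV, hxV⟩ := hx
      exact mem_biUnion hV ⟨hxV, hxA⟩
    refine IsMeagre.mono this ?_
    rw [IsMeagre, compl_iUnion₂]
    rw [countable_bInter_mem hTc]
    exact fun V hV => (hTsub hV).2
  refine ⟨(A ∩ U) ∪ (Uᶜ ∩ closure A), ?_, ?_, ?_, ?_⟩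
  · -- Baire measurable
    have hC : BaireMeasurableSet (Uᶜ ∩ closure A) :=
      (hUo.baireMeasurableSet.compl).inter
        ((isClosed_closure.isOpen_compl.baireMeasurableSet).of_compl)
    refine hC.congr ?_
    rw [KU.eventuallyEq_iff_isMeagre_symmDiff]
    refine IsMeagre.mono ?_ hUA
    intro x hx
    rcases Set.mem_symmDiff.1 hx with ⟨hx1, hx2⟩ | ⟨hx1, hx2⟩
    · exact absurd (Or.inr hx1) hx2
    · rcases hx1 with ⟨hxA, hxU⟩ | hx1
      · exact ⟨hxU, hxA⟩
      · exact absurd hx1 hx2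
  · intro x hx
    by_cases hxU : x ∈ U
    · exact Or.inl ⟨hx, hxU⟩
    · exact Or.inr ⟨hxU, subset_closure hx⟩
  · rintro x (⟨hxA, _⟩ | ⟨_, hx⟩)
    · exact subset_closure hxA
    · exact hx
  · intro Z hZ hZsub
    obtain ⟨W, hWo, hZW⟩ := hZ.residualEq_isOpen
    have hZWm : IsMeagre (Z ∆ W) := KU.eventuallyEq_iff_isMeagre_symmDiff.1 hZW
    have hZA : ∀ x ∈ Z, x ∉ A := fun x hx => (hZsub hx).2
    have hWU : W ⊆ U := by
      refine subset_sUnion_of_mem ⟨hWo, ?_⟩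
      refine IsMeagre.mono ?_ hZWm
      rintro x ⟨hxW, hxA⟩
      rcases em (x ∈ Z) with hxZ | hxZ
      · exact absurd hxA (hZA x hxZ)
      · exact Set.mem_symmDiff.2 (Or.inr ⟨hxW, hxZ⟩)
    have hZU : ∀ x ∈ Z, x ∉ U := by
      intro x hxZ hxU
      rcases (hZsub hxZ).1 with ⟨hxA, _⟩ | ⟨hxU', _⟩
      · exact hZA x hxZ hxA
      · exact hxU' hxU
    refine IsMeagre.mono ?_ hZWm
    intro x hx
    exact Set.mem_symmDiff.2 (Or.inl ⟨hx, fun hxW => hZU x hx (hWU hxW)⟩)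

/-- The cylinder in Baire space determined by a finite list. -/
def KU.Cyl (L : List ℕ) : Set (ℕ → ℕ) :=
  PiNat.cylinder (fun i => L.getD i 0) L.length

lemma KU.mem_Cyl {L : List ℕ} {α : ℕ → ℕ} :
    α ∈ KU.Cyl L ↔ ∀ i < L.length, α i = L.getD i 0 :=
  PiNat.mem_cylinder_iff

lemma KU.isMeagre_iUnion' {ι : Sort*} [Countable ι] {X : Type*} [TopologicalSpace X]
    {s : ι → Set X} (hs : ∀ i, IsMeagre (s i)) : IsMeagre (⋃ i, s i) := by
  rw [IsMeagre, compl_iUnion]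
  exact countable_iInter_mem.2 hs

lemma KU.getD_prefix {l₁ l₂ : List ℕ} (h : l₁ <+: l₂) {i : ℕ} (hi : i < l₁.length) :
    l₂.getD i 0 = l₁.getD i 0 := by
  obtain ⟨r, rfl⟩ := h
  exact List.getD_append _ _ _ _ hi

lemma KU.Cyl_succ_subset (L : List ℕ) (n : ℕ) : KU.Cyl (L ++ [n]) ⊆ KU.Cyl L := by
  intro β hβ
  rw [KU.mem_Cyl] at hβ ⊢
  intro i hi
  rw [← List.getD_append _ _ _ _ hi]
  exact hβ i (by simp [List.length_append]; omega)

lemma KU.Cyl_eq_iUnion (L : List ℕ) : KU.Cyl L = ⋃ n, KU.Cyl (L ++ [n]) := by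
  apply Subset.antisymm
  · intro α hα
    refine mem_iUnion.2 ⟨α L.length, ?_⟩
    rw [KU.mem_Cyl] at hα ⊢
    intro i hi
    rcases lt_or_eq_of_le (Nat.lt_succ_iff.1 (by simpa [List.length_append] using hi)) with h | h
    · rw [List.getD_append _ _ _ _ h]
      exact hα i h
    · subst h
      rw [List.getD_append_right _ _ _ _ (le_refl _)]
      simp
  · exact iUnion_subset fun n => KU.Cyl_succ_subset L n

lemma KU.analyticSet_baireMeasurableSet {Y : Type*} [TopologicalSpace Y] [PolishSpace Y]
    {A : Set Y} (hA : MeasureTheory.AnalyticSet A) : BaireMeasurableSet A := by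
  classical
  rw [MeasureTheory.AnalyticSet] at hA
  rcases hA with h | ⟨f, fcont, rfl⟩
  · rw [h]; exact isOpen_empty.baireMeasurableSet
  letI := TopologicalSpace.upgradeIsCompletelyMetrizable Y
  choose H hBMS hsub hclos hmeag using fun L : List ℕ => KU.exists_baire_hull (f '' KU.Cyl L)
  set M : Set Y := ⋃ L : List ℕ, (H L \ ⋃ n, H (L ++ [n])) with hM
  have hMm : IsMeagre M := by
    apply KU.isMeagre_iUnion'
    intro L
    refine hmeag L _ ((hBMS L).diff (BaireMeasurableSet.iUnion fun n => hBMS (L ++ [n]))) ?_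
    rintro x ⟨hx1, hx2⟩
    refine ⟨hx1, fun hx3 => hx2 ?_⟩
    rw [KU.Cyl_eq_iUnion, image_iUnion] at hx3
    obtain ⟨n, hn⟩ := mem_iUnion.1 hx3
    exact mem_iUnion.2 ⟨n, hsub _ hn⟩
  have hclaim : H [] \ range f ⊆ M := by
    intro x hx
    by_contra hxM
    apply hx.2
    -- construct the branch
    have step : ∀ L : List ℕ, x ∈ H L → ∃ n, x ∈ H (L ++ [n]) := by
      intro L hL
      by_contra h
      push_neg at h
      exact hxM (mem_iUnion.2 ⟨L, hL, fun hx' => by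
        obtain ⟨n, hn⟩ := mem_iUnion.1 hx'; exact h n hn⟩)
    set nxt : List ℕ → ℕ := fun L =>
      if h : ∃ n, x ∈ H (L ++ [n]) then h.choose else 0 with hnxt
    set t : ℕ → List ℕ := fun n => Nat.rec [] (fun _ L => L ++ [nxt L]) n with ht
    have ht0 : t 0 = [] := rfl
    have htS : ∀ n, t (n + 1) = t n ++ [nxt (t n)] := fun n => rfl
    have hlen : ∀ n, (t n).length = n := by
      intro n; induction n with
      | zero => rfl
      | succ n ih => rw [htS, List.length_append, ih]; rfl
    have hinv : ∀ n, x ∈ H (t n) := by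
      intro n; induction n with
      | zero => exact hx.1
      | succ n ih =>
        rw [htS, hnxt]
        have h := step (t n) ih
        simp only [dif_pos h]
        exact h.choose_spec
    have hpre : ∀ m n, m ≤ n → t m <+: t n := by
      intro m n hmn
      induction n with
      | zero => rw [Nat.le_zero.1 hmn]
      | succ n ih =>
        rcases eq_or_lt_of_le hmn with h | h
        · rw [h]
        · exact (ih (Nat.lt_succ_iff.1 h)).trans ⟨[nxt (t n)], (htS n).symm⟩
    set α : ℕ → ℕ := fun i => (t (i + 1)).getD i 0 with hα
    have hagree : ∀ n, ∀ i, i < n → α i = (t n).getD i 0 := by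
      intro n i hi
      show (t (i + 1)).getD i 0 = (t n).getD i 0
      exact (KU.getD_prefix (hpre (i + 1) n hi)
        (lt_of_lt_of_eq (Nat.lt_succ_self i) (hlen (i + 1)).symm)).symm
    have hsubcyl : ∀ n, KU.Cyl (t n) ⊆ PiNat.cylinder α n := by
      intro n β hβ
      rw [PiNat.mem_cylinder_iff]
      intro i hi
      rw [KU.mem_Cyl] at hβ
      rw [hβ i (lt_of_lt_of_eq hi (hlen n).symm), hagree n i hi]
    have hdist : ∀ ε : ℝ, 0 < ε → dist x (f α) ≤ ε := by
      intro ε hε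
      have hnhds : f ⁻¹' Metric.ball (f α) ε ∈ nhds α :=
        fcont.continuousAt (Metric.ball_mem_nhds _ hε)
      obtain ⟨v, ⟨y, n, rfl⟩, hαv, hvsub⟩ :=
        (PiNat.isTopologicalBasis_cylinders (fun _ => ℕ)).mem_nhds_iff.1 hnhds
      rw [PiNat.mem_cylinder_iff_eq] at hαv
      have hcyl : PiNat.cylinder α n ⊆ f ⁻¹' Metric.ball (f α) ε := hαv ▸ hvsub
      have hx' : x ∈ closure (f '' KU.Cyl (t n)) := hclos _ (hinv n)
      have : closure (f '' KU.Cyl (t n)) ⊆ Metric.closedBall (f α) ε := by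
        refine subset_trans (closure_mono ?_) Metric.closure_ball_subset_closedBall
        intro y' hy'
        obtain ⟨β, hβ, rfl⟩ := hy'
        exact hcyl (hsubcyl n hβ)
      exact Metric.mem_closedBall.1 (this hx')
    have : dist x (f α) ≤ 0 := le_of_forall_pos_le_add (by
      intro ε hε; rw [zero_add]; exact hdist ε hε)
    exact ⟨α, (dist_le_zero.1 this).symm⟩
  have hrsub : range f ⊆ H [] := by
    have : f '' KU.Cyl [] = range f := by
      rw [KU.Cyl]
      simp [PiNat.cylinder_zero, image_univ]
    rw [← this]
    exact hsub []
  refine (hBMS []).congr ?_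
  rw [KU.eventuallyEq_iff_isMeagre_symmDiff]
  refine IsMeagre.mono ?_ hMm
  intro x hxd
  rcases Set.mem_symmDiff.1 hxd with ⟨h1, h2⟩ | ⟨h1, h2⟩
  · exact hclaim ⟨h1, h2⟩
  · exact absurd (hrsub h1) h2

lemma KU.isClopen_Cyl (L : List ℕ) : IsClopen (KU.Cyl L) := by
  constructor
  · rw [KU.Cyl, PiNat.cylinder_eq_pi]
    exact isClosed_set_pi fun i _ => isClosed_discrete _
  · exact PiNat.isOpen_cylinder _ _ _

end KUAux

open Topology Filter in
theorem analytic_baire_property_almost_uniformly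
    {X : Type*} [TopologicalSpace X] [PolishSpace X]
    (b : ℕ → Set X)
    (hopen : ∀ s, IsOpen (b s))
    (hbasis : TopologicalSpace.IsTopologicalBasis (Set.range b))
    (hempty : (∅ : Set X) ∈ Set.range b)
    (G : Set ((ℕ → ℕ) × X))
    (hG : AnalyticSet G) :
    ∃ u : (ℕ → ℕ) → (ℕ → ℕ), Continuous u ∧
      {α : ℕ → ℕ | IsMeagre ({x : X | (α, x) ∈ G} ∆ (⋃ n, b (u α n)))}
        ∈ residual (ℕ → ℕ) := by
  classical
  obtain ⟨e₀, he₀⟩ := hempty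
  obtain ⟨U, hUo, hGU⟩ := (KU.analyticSet_baireMeasurableSet hG).residualEq_isOpen
  have hGUm : IsMeagre (G ∆ U) := KU.eventuallyEq_iff_isMeagre_symmDiff.1 hGU
  -- the coding function
  set D : Set (List ℕ × ℕ) := {p | KU.Cyl p.1 ×ˢ b p.2 ⊆ U} with hD
  set g : ℕ ≃ (List ℕ × ℕ) := (Denumerable.eqv (List ℕ × ℕ)).symm with hg
  set u : (ℕ → ℕ) → (ℕ → ℕ) :=
    fun α n => if α ∈ KU.Cyl (g n).1 ∧ (g n) ∈ D then (g n).2 else e₀ with hu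
  have husec : ∀ α, (⋃ n, b (u α n)) = {x | (α, x) ∈ U} := by
    intro α
    apply Subset.antisymm
    · intro x hx
      obtain ⟨n, hn⟩ := mem_iUnion.1 hx
      rw [hu] at hn
      by_cases hc : α ∈ KU.Cyl (g n).1 ∧ (g n) ∈ D
      · simp only [if_pos hc] at hn
        exact hc.2 (Set.mk_mem_prod hc.1 hn)
      · simp only [if_neg hc] at hn
        rw [he₀] at hn
        exact absurd hn (notMem_empty x)
    · intro x hx
      -- use the product basis
      have hb2 :=
        (PiNat.isTopologicalBasis_cylinders (fun _ : ℕ => ℕ)).prod hbasis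
      obtain ⟨v, ⟨s1, ⟨y, m, rfl⟩, s2, ⟨k, rfl⟩, rfl⟩, hxv, hvU⟩ :=
        hb2.exists_subset_of_mem_open (show (α, x) ∈ U from hx) hUo
      have hαs1 : α ∈ PiNat.cylinder y m := hxv.1
      rw [PiNat.mem_cylinder_iff_eq] at hαs1
      set L : List ℕ := (List.range m).map α with hL
      have hCyl : KU.Cyl L = PiNat.cylinder α m := by
        ext β
        rw [KU.mem_Cyl, PiNat.mem_cylinder_iff]
        have hlen : L.length = m := by simp [hL]
        constructor
        · intro h i hi
          have := h i (by rw [hlen]; exact hi)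
          rwa [hL, List.getD_eq_getElem _ _ (by simpa using hi), List.getElem_map,
            List.getElem_range] at this
        · intro h i hi
          rw [hlen] at hi
          rw [hL, List.getD_eq_getElem _ _ (by simpa using hi), List.getElem_map,
            List.getElem_range]
          exact h i hi
      have hmemD : (L, k) ∈ D := by
        rw [hD, mem_setOf_eq]
        simp only
        rw [hCyl, hαs1]
        exact hvU
      refine mem_iUnion.2 ⟨g.symm (L, k), ?_⟩
      rw [hu]
      simp only [Equiv.apply_symm_apply]
      rw [if_pos ⟨show α ∈ KU.Cyl L by rw [hCyl]; exact PiNat.self_mem_cylinder _ _, hmemD⟩]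
      exact hxv.2
  refine ⟨u, ?_, ?_⟩
  · apply continuous_pi
    intro n
    by_cases hc : (g n) ∈ D
    · have heq : (fun α => u α n) =
          fun α => if α ∈ KU.Cyl (g n).1 then (g n).2 else e₀ := by
        funext α; rw [hu]; simp [hc]
      rw [heq]
      refine Continuous.if ?_ continuous_const continuous_const
      intro a ha
      rw [show {x | x ∈ KU.Cyl (g n).1} = KU.Cyl (g n).1 from rfl,
        (KU.isClopen_Cyl (g n).1).frontier_eq] at ha
      exact absurd ha (notMem_empty a)
    · have heq : (fun α => u α n) = fun _ => e₀ := by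
        funext α; rw [hu]; simp [hc]
      rw [heq]
      exact continuous_const
  · have hres := KU.sections_meagre hGUm
    refine mem_of_superset hres ?_
    intro α hα
    simp only [mem_setOf_eq] at hα ⊢
    rw [husec α]
    have : {x : X | (α, x) ∈ G ∆ U} = {x : X | (α, x) ∈ G} ∆ {x : X | (α, x) ∈ U} := by
      ext x
      simp only [mem_setOf_eq, Set.mem_symmDiff]
    rw [← this]
    exact hα
end

section
/- The set Dom := {(α, n) ∈ 𝒩 × ℕ | {α}(n)↓} is a Gδ subset of 𝒩 × ℕ (a countable intersection of open sets). -/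
open Set

/-- `u` is an initial segment of `β`. -/
def IsInitSeg (β : ℕ → ℕ) (u : List ℕ) : Prop :=
  ∀ i : ℕ, ∀ h : i < u.length, β i = u.get ⟨i, h⟩

/-- The set of finite sequences enumerated by `α` at argument `n`. -/
def codeSet (α : ℕ → ℕ) (n : ℕ) : Set (List ℕ) :=
  {u : List ℕ | ∃ m, α m = Nat.pair n (Encodable.encode u)}

/-- `{α}(n)↓` : the partial function coded by `α` is defined at `n`. -/
def Defined (α : ℕ → ℕ) (n : ℕ) : Prop :=
  ∃! β : ℕ → ℕ, ∀ u : List ℕ, IsInitSeg β u ↔ u ∈ codeSet α n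

lemma isInitSeg_ofFn (β : ℕ → ℕ) (k : ℕ) :
    IsInitSeg β (List.ofFn fun i : Fin k => β i) := by
  intro i h
  simp [List.get_ofFn]

lemma initSeg_eq_of_length_eq {β : ℕ → ℕ} {u v : List ℕ}
    (hu : IsInitSeg β u) (hv : IsInitSeg β v) (h : u.length = v.length) : u = v := by
  apply List.ext_get h
  intro i h1 h2
  rw [← hu i h1, ← hv i h2]

lemma initSeg_prefix {β : ℕ → ℕ} {u v : List ℕ}
    (hu : IsInitSeg β u) (hv : IsInitSeg β v) (h : u.length ≤ v.length) : u <+: v := by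
  rw [List.prefix_iff_eq_take]
  apply List.ext_get (by simp [h])
  intro i h1 h2
  have h1' : i < v.length := lt_of_lt_of_le h1 h
  have := (hu i h1).symm.trans (hv i h1')
  simp only [List.get_eq_getElem] at this ⊢
  simp [List.getElem_take, this]

lemma prefix_initSeg {β : ℕ → ℕ} {u v : List ℕ}
    (hv : IsInitSeg β v) (h : u <+: v) : IsInitSeg β u := by
  intro i hi
  have hi' : i < v.length := lt_of_lt_of_le hi h.length_le
  rw [hv i hi']
  have := List.IsPrefix.getElem h hi
  simpa [List.get_eq_getElem] using this.symm

/-- Concrete characterization of `Defined`. -/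
lemma defined_iff (α : ℕ → ℕ) (n : ℕ) :
    Defined α n ↔ (∀ k : ℕ, ∃ u ∈ codeSet α n, u.length = k) ∧
      (∀ u ∈ codeSet α n, ∀ v ∈ codeSet α n, u <+: v ∨ v <+: u) := by
  constructor
  · rintro ⟨β, hβ, -⟩
    constructor
    · intro k
      exact ⟨List.ofFn fun i : Fin k => β i, (hβ _).1 (isInitSeg_ofFn β k), by simp⟩
    · intro u hu v hv
      rcases le_total u.length v.length with h | h
      · exact Or.inl (initSeg_prefix ((hβ u).2 hu) ((hβ v).2 hv) h)
      · exact Or.inr (initSeg_prefix ((hβ v).2 hv) ((hβ u).2 hu) h)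
  · rintro ⟨hlen, hcomp⟩
    choose w hw hwlen using hlen
    set β : ℕ → ℕ := fun i => (w (i + 1)).get ⟨i, by rw [hwlen]; omega⟩ with hβdef
    have hwseg : ∀ u ∈ codeSet α n, IsInitSeg β u := by
      intro u hu i hi
      rcases hcomp u hu (w (i + 1)) (hw (i + 1)) with h | h
      · have := List.IsPrefix.getElem h hi
        simpa [hβdef, List.get_eq_getElem] using this.symm
      · have hi' : i < (w (i + 1)).length := by rw [hwlen]; omega
        have := List.IsPrefix.getElem h hi'
        simpa [hβdef, List.get_eq_getElem] using this
    have hmain : ∀ u : List ℕ, IsInitSeg β u ↔ u ∈ codeSet α n := by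
      intro u
      constructor
      · intro hseg
        have : u = w u.length :=
          initSeg_eq_of_length_eq hseg (hwseg _ (hw u.length)) (hwlen u.length).symm
        rw [this]; exact hw u.length
      · exact hwseg u
    refine ⟨β, hmain, ?_⟩
    intro γ hγ
    funext i
    have hseg : IsInitSeg γ (w (i + 1)) := (hγ _).2 (hw (i + 1))
    have hi : i < (w (i + 1)).length := by rw [hwlen]; omega
    rw [hseg i hi]

lemma isOpen_mem_codeSet (u : List ℕ) :
    IsOpen {p : (ℕ → ℕ) × ℕ | u ∈ codeSet p.1 p.2} := by
  have : {p : (ℕ → ℕ) × ℕ | u ∈ codeSet p.1 p.2} =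
      ⋃ m : ℕ, (fun p : (ℕ → ℕ) × ℕ => (p.1 m, p.2)) ⁻¹'
        {q : ℕ × ℕ | q.1 = Nat.pair q.2 (Encodable.encode u)} := by
    ext p
    simp [codeSet]
  rw [this]
  exact isOpen_iUnion fun m =>
    (((continuous_apply m).comp continuous_fst).prodMk continuous_snd).isOpen_preimage _
      (isOpen_discrete _)

theorem dom_isGδ :
    IsGδ {p : (ℕ → ℕ) × ℕ | Defined p.1 p.2} := by
  have heq : {p : (ℕ → ℕ) × ℕ | Defined p.1 p.2} =
      (⋂ k : ℕ, {p : (ℕ → ℕ) × ℕ | ∃ u ∈ codeSet p.1 p.2, u.length = k}) ∩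
      (⋂ u : List ℕ, ⋂ v : List ℕ,
        {p : (ℕ → ℕ) × ℕ | u ∈ codeSet p.1 p.2 → v ∈ codeSet p.1 p.2 →
          u <+: v ∨ v <+: u}) := by
    ext p
    simp only [mem_setOf_eq, mem_inter_iff, mem_iInter, defined_iff]
    exact ⟨fun ⟨h1, h2⟩ => ⟨h1, fun u v hu hv => h2 u hu v hv⟩,
      fun ⟨h1, h2⟩ => ⟨h1, fun u hu v hv => h2 u v hu hv⟩⟩
  rw [heq]
  apply IsGδ.inter
  · apply IsGδ.iInter
    intro k
    apply IsOpen.isGδ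
    have : {p : (ℕ → ℕ) × ℕ | ∃ u ∈ codeSet p.1 p.2, u.length = k} =
        ⋃ u : List ℕ, ⋃ _ : u.length = k, {p : (ℕ → ℕ) × ℕ | u ∈ codeSet p.1 p.2} := by
      ext p; simp; tauto
    rw [this]
    exact isOpen_iUnion fun u => isOpen_iUnion fun _ => isOpen_mem_codeSet u
  · apply IsGδ.iInter
    intro u
    apply IsGδ.iInter
    intro v
    by_cases hc : u <+: v ∨ v <+: u
    · have : {p : (ℕ → ℕ) × ℕ | u ∈ codeSet p.1 p.2 → v ∈ codeSet p.1 p.2 →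
          u <+: v ∨ v <+: u} = univ := by
        ext p; simp [hc]
      rw [this]; exact IsGδ.univ
    · have : {p : (ℕ → ℕ) × ℕ | u ∈ codeSet p.1 p.2 → v ∈ codeSet p.1 p.2 →
          u <+: v ∨ v <+: u} =
          ({p : (ℕ → ℕ) × ℕ | u ∈ codeSet p.1 p.2} ∩
           {p : (ℕ → ℕ) × ℕ | v ∈ codeSet p.1 p.2})ᶜ := by
        ext p
        constructor
        · intro hp hmem
          exact hc (hp hmem.1 hmem.2)
        · intro hp h1 h2
          exact absurd ⟨h1, h2⟩ hp
      rw [this]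
      exact (((isOpen_mem_codeSet u).inter (isOpen_mem_codeSet v)).isClosed_compl).isGδ
end

section
/- The evaluation map is continuous on its domain: letting Dom := {(α, n) ∈ 𝒩 × ℕ | {α}(n)↓} carry the subspace topology, the function Dom → 𝒩 sending (α, n) to the unique value {α}(n) is continuous. -/
open Set

/-- The domain of the evaluation map, as a subspace of `𝒩 × ℕ`. -/
def Dom : Set ((ℕ → ℕ) × ℕ) := {p | Defined p.1 p.2}

/-- The evaluation map `(α, n) ↦ {α}(n)` on its domain. -/
noncomputable def eval (p : Dom) : ℕ → ℕ :=
  (p.2 : Defined p.1.1 p.1.2).choose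

lemma eval_spec (p : Dom) :
    ∀ u : List ℕ, IsInitSeg (eval p) u ↔ u ∈ codeSet p.1.1 p.1.2 :=
  (p.2 : Defined p.1.1 p.1.2).choose_spec.1

theorem eval_continuous : Continuous eval := by
  apply continuous_pi
  intro k
  rw [continuous_discrete_rng]
  intro v
  rw [isOpen_iff_forall_mem_open]
  rintro p hp
  -- u : first k+1 values of eval p
  set u : List ℕ := List.ofFn (fun i : Fin (k + 1) => eval p i) with hu
  have hlen : u.length = k + 1 := by simp [hu]
  have hinit : IsInitSeg (eval p) u := by
    intro i h
    simp only [hu, List.get_eq_getElem, List.getElem_ofFn]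
  obtain ⟨m, hm⟩ := (eval_spec p u).mp hinit
  refine ⟨{q : Dom | q.1.1 m = p.1.1 m ∧ q.1.2 = p.1.2}, ?_, ?_, ?_⟩
  · intro q hq
    have hcode : u ∈ codeSet q.1.1 q.1.2 := ⟨m, by rw [hq.1, hq.2]; exact hm⟩
    have hinit' : IsInitSeg (eval q) u := (eval_spec q u).mpr hcode
    have hk : k < u.length := by omega
    have h1 := hinit' k hk
    have h2 := hinit k hk
    simp only [mem_preimage, mem_singleton_iff]
    rw [h1, ← h2]
    exact hp
  · have : Continuous (fun q : Dom => ((q.1.1 m, q.1.2) : ℕ × ℕ)) := by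
      apply Continuous.prodMk
      · exact (continuous_apply m).comp (continuous_fst.comp continuous_subtype_val)
      · exact continuous_snd.comp continuous_subtype_val
    have := this.isOpen_preimage {(p.1.1 m, p.1.2)} (isOpen_discrete _)
    convert this using 1
    ext q
    simp [Prod.ext_iff]
  · exact ⟨rfl, rfl⟩
end

section
/- Uniformly approximating closed sets by open sets in the codes: let X be a Polish space and b : ℕ → Set X a basic open enumeration of X. There exists a function apc : 𝒩 → 𝒩 such that (i) apc is Σ⁰₂-measurable, i.e. for every open V ⊆ 𝒩 the preimage apc⁻¹(V) is an Fσ set (a countable union of closed subsets of 𝒩); and (ii) for every α ∈ 𝒩 the symmetric difference (X \ U_b(α)) Δ U_b(apc α) is meager in X. -/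
open Set

namespace ApproxAux

open scoped Classical

/-- Fσ predicate on subsets of Baire space. -/
def Fsig (s : Set (ℕ → ℕ)) : Prop :=
  ∃ F : ℕ → Set (ℕ → ℕ), (∀ n, IsClosed (F n)) ∧ s = ⋃ n, F n

lemma Fsig.of_isClosed {s : Set (ℕ → ℕ)} (h : IsClosed s) : Fsig s :=
  ⟨fun _ => s, fun _ => h, (Set.iUnion_const s).symm⟩

lemma Fsig.empty : Fsig (∅ : Set (ℕ → ℕ)) := .of_isClosed isClosed_empty

lemma Fsig.iUnion {s : ℕ → Set (ℕ → ℕ)} (h : ∀ n, Fsig (s n)) : Fsig (⋃ n, s n) := by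
  choose F hF hs using h
  refine ⟨fun k => F (Nat.unpair k).1 (Nat.unpair k).2, fun k => hF _ _, ?_⟩
  ext α
  simp only [mem_iUnion]
  constructor
  · rintro ⟨n, hn⟩
    rw [hs n] at hn
    simp only [mem_iUnion] at hn
    obtain ⟨m, hm⟩ := hn
    exact ⟨Nat.pair n m, by simpa [Nat.unpair_pair] using hm⟩
  · rintro ⟨k, hk⟩
    exact ⟨(Nat.unpair k).1, by rw [hs]; exact mem_iUnion.2 ⟨_, hk⟩⟩

lemma Fsig.union {s t : Set (ℕ → ℕ)} (hs : Fsig s) (ht : Fsig t) : Fsig (s ∪ t) := by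
  have h : (s ∪ t) = ⋃ n : ℕ, (if n = 0 then s else t) := by
    ext x
    simp only [mem_union, mem_iUnion]
    constructor
    · rintro (h | h)
      · exact ⟨0, by simpa⟩
      · exact ⟨1, by simpa⟩
    · rintro ⟨n, hn⟩
      by_cases h0 : n = 0
      · left; simpa [h0] using hn
      · right; simpa [h0] using hn
  rw [h]
  exact Fsig.iUnion fun n => by split <;> assumption

lemma Fsig.inter {s t : Set (ℕ → ℕ)} (hs : Fsig s) (ht : Fsig t) : Fsig (s ∩ t) := by
  obtain ⟨F, hF, rfl⟩ := hs
  obtain ⟨G, hG, rfl⟩ := ht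
  refine ⟨fun k => F (Nat.unpair k).1 ∩ G (Nat.unpair k).2,
    fun k => (hF _).inter (hG _), ?_⟩
  ext x
  simp only [mem_inter_iff, mem_iUnion]
  constructor
  · rintro ⟨⟨n, hn⟩, ⟨m, hm⟩⟩
    exact ⟨Nat.pair n m, by simp [Nat.unpair_pair, hn, hm]⟩
  · rintro ⟨k, h1, h2⟩
    exact ⟨⟨_, h1⟩, ⟨_, h2⟩⟩

lemma Fsig.univ : Fsig (univ : Set (ℕ → ℕ)) := .of_isClosed isClosed_univ

lemma Fsig.biInter {u : Finset ℕ} {f : ℕ → Set (ℕ → ℕ)} (h : ∀ i, Fsig (f i)) :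
    Fsig (⋂ i ∈ u, f i) := by
  classical
  induction u using Finset.induction with
  | empty => simpa using Fsig.univ
  | insert _ _ hx ih =>
    rw [Finset.set_biInter_insert]
    exact (h _).inter ih

/-- The cylinder coded by a list. -/
def cyl (l : List ℕ) : Set (ℕ → ℕ) := PiNat.cylinder (fun i => l.getD i 0) l.length

lemma isClosed_cyl (l : List ℕ) : IsClosed (cyl l) := by
  rw [cyl, PiNat.cylinder_eq_pi]
  exact isClosed_set_pi fun a _ => isClosed_discrete _

lemma mem_cyl_iff {l : List ℕ} {α : ℕ → ℕ} :
    α ∈ cyl l ↔ ∀ i < l.length, α i = l.getD i 0 := PiNat.mem_cylinder_iff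

lemma open_eq_iUnion_cyl (V : Set (ℕ → ℕ)) (hV : IsOpen V) :
    V = ⋃ n : ℕ, (if cyl (Denumerable.ofNat (List ℕ) n) ⊆ V
      then cyl (Denumerable.ofNat (List ℕ) n) else ∅) := by
  apply Subset.antisymm
  · intro α hα
    obtain ⟨v, ⟨x, n, rfl⟩, hxv, hvV⟩ :=
      (PiNat.isTopologicalBasis_cylinders (fun _ : ℕ => ℕ)).exists_subset_of_mem_open hα hV
    have hc : PiNat.cylinder x n = PiNat.cylinder α n := (PiNat.mem_cylinder_iff_eq.1 hxv).symm
    set l : List ℕ := List.ofFn (fun i : Fin n => α i) with hl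
    have hlen : l.length = n := List.length_ofFn
    have hcyl : cyl l = PiNat.cylinder α n := by
      rw [cyl, hlen]
      apply PiNat.mem_cylinder_iff_eq.1
      rw [PiNat.mem_cylinder_iff]
      intro i hi
      simp [hl, List.getD_eq_getElem?_getD, List.getElem?_ofFn, hi]
    have hsub : cyl l ⊆ V := by rw [hcyl, ← hc]; exact hvV
    have hmem : α ∈ cyl l := by rw [hcyl]; exact PiNat.self_mem_cylinder _ _
    refine mem_iUnion.2 ⟨Encodable.encode l, ?_⟩
    rw [Denumerable.ofNat_encode (α := List ℕ)]
    simp only [hsub, if_true]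
    exact hmem
  · refine iUnion_subset fun n => ?_
    split
    · assumption
    · exact empty_subset _

lemma Fsig.of_isOpen {V : Set (ℕ → ℕ)} (hV : IsOpen V) : Fsig V := by
  rw [open_eq_iUnion_cyl V hV]
  exact Fsig.iUnion fun n => by
    split
    · exact .of_isClosed (isClosed_cyl _)
    · exact .empty

lemma nowhereDense_isMeagre {Y : Type*} [TopologicalSpace Y] {s : Set Y}
    (h : IsNowhereDense s) : IsMeagre s :=
  isMeagre_iff_countable_union_isNowhereDense.2
    ⟨{s}, by simpa using h, countable_singleton _, by simp⟩

end ApproxAux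
open Set
open scoped symmDiff

theorem approx_closed_by_open_in_codes
    {X : Type*} [TopologicalSpace X] [PolishSpace X]
    (b : ℕ → Set X)
    (hopen : ∀ s, IsOpen (b s))
    (hbasis : TopologicalSpace.IsTopologicalBasis (Set.range b))
    (hempty : (∅ : Set X) ∈ Set.range b) :
    ∃ apc : (ℕ → ℕ) → (ℕ → ℕ),
      (∀ V : Set (ℕ → ℕ), IsOpen V →
        ∃ F : ℕ → Set (ℕ → ℕ), (∀ n, IsClosed (F n)) ∧ apc ⁻¹' V = ⋃ n, F n) ∧
      ∀ α : ℕ → ℕ, IsMeagre ((⋃ n, b (α n))ᶜ ∆ (⋃ n, b (apc α n))) := by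
  classical
  open ApproxAux in
  obtain ⟨e, he⟩ := hempty
  set A : ℕ → Set (ℕ → ℕ) := fun i => {α | ∀ m, Disjoint (b i) (b (α m))} with hA_def
  have hA : ∀ i, IsClosed (A i) := by
    intro i
    have : A i = ⋂ m, (fun α : ℕ → ℕ => α m) ⁻¹' {k | Disjoint (b i) (b k)} := by
      ext α; simp [hA_def, Set.mem_iInter]
    rw [this]
    exact isClosed_iInter fun m => (isClosed_discrete _).preimage (continuous_apply m)
  refine ⟨fun α n => if α ∈ A n then n else e, ?_, ?_⟩
  · -- measurability
    intro V hV
    set apc : (ℕ → ℕ) → (ℕ → ℕ) := fun α n => if α ∈ A n then n else e with hapc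
    show ∃ F : ℕ → Set (ℕ → ℕ), (∀ n, IsClosed (F n)) ∧ apc ⁻¹' V = ⋃ n, F n
    suffices h : Fsig (apc ⁻¹' V) by exact h
    have hT : ∀ i k : ℕ, Fsig {α : ℕ → ℕ | apc α i = k} := by
      intro i k
      have : {α : ℕ → ℕ | apc α i = k} =
          ((if i = k then A i else ∅) ∪ (if e = k then (A i)ᶜ else ∅)) := by
        ext α
        by_cases hm : α ∈ A i <;>
          simp [hapc, hm]
      rw [this]
      refine Fsig.union ?_ ?_
      · split
        · exact .of_isClosed (hA i)
        · exact .empty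
      · split
        · exact .of_isOpen (hA i).isOpen_compl
        · exact .empty
    have key : ∀ l : List ℕ, Fsig (apc ⁻¹' cyl l) := by
      intro l
      have : apc ⁻¹' cyl l = ⋂ i ∈ Finset.range l.length, {α : ℕ → ℕ | apc α i = l.getD i 0} := by
        ext α
        simp [mem_cyl_iff, Set.mem_iInter]
      rw [this]
      exact Fsig.biInter fun i => hT i _
    rw [open_eq_iUnion_cyl V hV, preimage_iUnion]
    refine Fsig.iUnion fun n => ?_
    split
    · exact key _
    · simpa using Fsig.empty
  · -- meagerness
    intro α
    set U : Set X := ⋃ n, b (α n) with hU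
    set W : Set X := ⋃ n, b (if α ∈ A n then n else e) with hW
    have hWsub : W ⊆ Uᶜ := by
      refine iUnion_subset fun n => ?_
      by_cases hm : α ∈ A n
      · simp only [hm, if_true]
        intro x hx hxU
        obtain ⟨m, hmem⟩ := mem_iUnion.1 hxU
        exact (hm m).ne_of_mem hx hmem rfl
      · simp [hm, he]
    have hint : interior Uᶜ ⊆ W := by
      intro x hx
      obtain ⟨t, ⟨s, rfl⟩, hxt, htsub⟩ :=
        hbasis.exists_subset_of_mem_open hx isOpen_interior
      have hs : α ∈ A s := by
        intro m
        rw [Set.disjoint_left]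
        intro y hy hy'
        exact interior_subset (htsub hy) (mem_iUnion.2 ⟨m, hy'⟩)
      refine mem_iUnion.2 ⟨s, ?_⟩
      simpa [hs] using hxt
    have hUc : IsClosed (Uᶜ : Set X) := (isOpen_iUnion fun n => hopen _).isClosed_compl
    have hDc : IsClosed (Uᶜ \ interior Uᶜ : Set X) :=
      hUc.sdiff isOpen_interior
    have hDint : interior (Uᶜ \ interior Uᶜ : Set X) = ∅ := by
      rw [Set.eq_empty_iff_forall_notMem]
      intro x hx
      exact (interior_subset hx).2 (interior_mono diff_subset hx)
    have hmg : IsMeagre (Uᶜ \ interior Uᶜ : Set X) :=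
      ApproxAux.nowhereDense_isMeagre (hDc.isNowhereDense_iff.2 hDint)
    refine hmg.mono ?_
    intro x hx
    rcases Set.mem_symmDiff.1 hx with ⟨h1, h2⟩ | ⟨h1, h2⟩
    · exact ⟨h1, fun h => h2 (hint h)⟩
    · exact absurd (hWsub h1) h2
end

section
/- Uniformly approximating Fσ sets by open sets in the codes (the level-two case of the transition from Borel codes to open codes): let X be a Polish space and b : ℕ → Set X a basic open enumeration of X. There exists a function c : 𝒩 → 𝒩 such that (i) c is Σ⁰₂-measurable, i.e. for every open V ⊆ 𝒩 the preimage c⁻¹(V) is an Fσ set (a countable union of closed subsets of 𝒩); and (ii) for every α ∈ 𝒩 the symmetric difference (⋃ n, (X \ U_b((α)ₙ))) Δ U_b(c α) is meager in X, where (α)ₙ := (t ↦ α ⟨n, t⟩) and ⟨·,·⟩ is the pairing Nat.pair. (Here α codes the Fσ set ⋃ n, (X \ U_b((α)ₙ)).) -/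
open Set
open scoped symmDiff

namespace ApproxFsigmaAux

variable {Y : Type*} [TopologicalSpace Y]

/-- `s` is an Fσ set: countable union of closed sets. -/
def IsFsigma (s : Set Y) : Prop :=
  ∃ F : ℕ → Set Y, (∀ n, IsClosed (F n)) ∧ s = ⋃ n, F n

lemma isFsigma_of_isClosed {s : Set Y} (h : IsClosed s) : IsFsigma s :=
  ⟨fun _ => s, fun _ => h, (iUnion_const s).symm⟩

lemma isFsigma_empty : IsFsigma (∅ : Set Y) :=
  isFsigma_of_isClosed isClosed_empty

lemma IsFsigma.union {s t : Set Y} (hs : IsFsigma s) (ht : IsFsigma t) :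
    IsFsigma (s ∪ t) := by
  obtain ⟨F, hF, rfl⟩ := hs
  obtain ⟨G, hG, rfl⟩ := ht
  exact ⟨fun n => F n ∪ G n, fun n => (hF n).union (hG n), by
    rw [iUnion_union_distrib]⟩

lemma IsFsigma.inter {s t : Set Y} (hs : IsFsigma s) (ht : IsFsigma t) :
    IsFsigma (s ∩ t) := by
  obtain ⟨F, hF, rfl⟩ := hs
  obtain ⟨G, hG, rfl⟩ := ht
  refine ⟨fun k => F (Nat.unpair k).1 ∩ G (Nat.unpair k).2,
    fun k => (hF _).inter (hG _), ?_⟩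
  ext x
  simp only [mem_inter_iff, mem_iUnion]
  constructor
  · rintro ⟨⟨n, hn⟩, ⟨m, hm⟩⟩
    exact ⟨Nat.pair n m, by simpa [Nat.unpair_pair] using ⟨hn, hm⟩⟩
  · rintro ⟨k, hk1, hk2⟩
    exact ⟨⟨_, hk1⟩, ⟨_, hk2⟩⟩

lemma isFsigma_iUnion {ι : Type*} [Encodable ι] {f : ι → Set Y}
    (h : ∀ i, IsFsigma (f i)) : IsFsigma (⋃ i, f i) := by
  choose F hFc hFu using h
  refine ⟨fun k => match Encodable.decode (α := ι) (Nat.unpair k).1 with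
      | none => ∅
      | some i => F i (Nat.unpair k).2, fun k => ?_, ?_⟩
  · rcases hd : Encodable.decode (α := ι) (Nat.unpair k).1 with _ | i <;>
      simp [hd, isClosed_empty, hFc]
  · ext x
    simp only [mem_iUnion]
    constructor
    · rintro ⟨i, hi⟩
      rw [hFu i] at hi
      obtain ⟨m, hm⟩ := mem_iUnion.1 hi
      refine ⟨Nat.pair (Encodable.encode i) m, ?_⟩
      simp [Nat.unpair_pair, Encodable.encodek, hm]
    · rintro ⟨k, hk⟩
      rcases hd : Encodable.decode (α := ι) (Nat.unpair k).1 with _ | i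
      · simp [hd] at hk
      · simp only [hd] at hk
        exact ⟨i, (hFu i) ▸ mem_iUnion.2 ⟨_, hk⟩⟩

lemma isFsigma_iUnion_prop {p : Prop} {s : Set Y} (h : IsFsigma s) :
    IsFsigma (⋃ _ : p, s) := by
  by_cases hp : p
  · simpa [hp]
  · simpa [hp] using isFsigma_empty

lemma isFsigma_biInter_finset {ι : Type*} (t : Finset ι) {f : ι → Set Y}
    (h : ∀ i ∈ t, IsFsigma (f i)) : IsFsigma (⋂ i ∈ t, f i) := by
  classical
  induction t using Finset.induction_on with
  | empty => simpa using isFsigma_of_isClosed isClosed_univ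
  | @insert a s _ ih =>
    rw [Finset.set_biInter_insert]
    exact (h a (Finset.mem_insert_self a s)).inter
      (ih fun i hi => h i (Finset.mem_insert_of_mem hi))

/-- cylinder determined by a list -/
def cyl (l : List ℕ) : Set (ℕ → ℕ) := {β | ∀ i < l.length, β i = l.getD i 0}

lemma cyl_eq (l : List ℕ) :
    cyl l = ⋂ i ∈ Finset.range l.length, {β : ℕ → ℕ | β i = l.getD i 0} := by
  ext β; simp [cyl]

lemma open_eq_iUnion_cyl {V : Set (ℕ → ℕ)} (hV : IsOpen V) :
    V = ⋃ l : List ℕ, ⋃ _ : cyl l ⊆ V, cyl l := by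
  apply Subset.antisymm
  · intro x hx
    obtain ⟨I, u, hu, hsub⟩ := isOpen_pi_iff.1 hV x hx
    classical
    set N : ℕ := if h : I.Nonempty then I.max' h + 1 else 0 with hN
    have hIN : ∀ i ∈ I, i < N := by
      intro i hi
      have : I.Nonempty := ⟨i, hi⟩
      simp only [hN, dif_pos this]
      exact Nat.lt_succ_of_le (Finset.le_max' I i hi)
    set l : List ℕ := List.ofFn (fun i : Fin N => x i) with hl
    have hlen : l.length = N := by simp [hl]
    have hget : ∀ i < N, l.getD i 0 = x i := by
      intro i hi
      rw [hl, List.getD_eq_getElem _ _ (by simpa using hi)]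
      simp
    have hcylsub : cyl l ⊆ V := by
      intro β hβ
      apply hsub
      intro i hi
      have hiN : i < N := hIN i hi
      have : β i = x i := by
        have := hβ i (by rw [hlen]; exact hiN)
        rwa [hget i hiN] at this
      rw [this]
      exact (hu i hi).2
    refine mem_iUnion.2 ⟨l, mem_iUnion.2 ⟨hcylsub, ?_⟩⟩
    intro i hi
    exact (hget i (by rwa [hlen] at hi)).symm
  · intro x hx
    obtain ⟨l, hl⟩ := mem_iUnion.1 hx
    obtain ⟨hsub, hmem⟩ := mem_iUnion.1 hl
    exact hsub hmem

end ApproxFsigmaAux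

open ApproxFsigmaAux

theorem approx_Fsigma_by_open_in_codes
    {X : Type*} [TopologicalSpace X] [PolishSpace X]
    (b : ℕ → Set X)
    (hopen : ∀ s, IsOpen (b s))
    (hbasis : TopologicalSpace.IsTopologicalBasis (Set.range b))
    (hempty : (∅ : Set X) ∈ Set.range b) :
    ∃ c : (ℕ → ℕ) → (ℕ → ℕ),
      (∀ V : Set (ℕ → ℕ), IsOpen V →
        ∃ F : ℕ → Set (ℕ → ℕ), (∀ n, IsClosed (F n)) ∧ c ⁻¹' V = ⋃ n, F n) ∧
      ∀ α : ℕ → ℕ,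
        IsMeagre ((⋃ n, (⋃ m, b (α (Nat.pair n m)))ᶜ) ∆ (⋃ n, b (c α n))) := by
  classical
  obtain ⟨e, he⟩ := hempty
  -- the condition: code `k = ⟨n, s⟩` is "active" for `α` if `b s` is disjoint
  -- from every `b (α ⟨n, m⟩)`.
  set cond : (ℕ → ℕ) → ℕ → Prop :=
    fun α k => ∀ m, Disjoint (b (Nat.unpair k).2) (b (α (Nat.pair (Nat.unpair k).1 m)))
    with hcond
  set c : (ℕ → ℕ) → (ℕ → ℕ) :=
    fun α k => if cond α k then (Nat.unpair k).2 else e with hc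
  -- the set of `α` for which code `k` is active is closed
  have hPclosed : ∀ k, IsClosed {α : ℕ → ℕ | cond α k} := by
    intro k
    have : {α : ℕ → ℕ | cond α k} =
        ⋂ m, (fun α : ℕ → ℕ => α (Nat.pair (Nat.unpair k).1 m)) ⁻¹'
          {t | Disjoint (b (Nat.unpair k).2) (b t)} := by
      ext α; simp [hcond]
    rw [this]
    exact isClosed_iInter fun m =>
      (IsClosed.preimage (continuous_apply _) (isClosed_discrete _))
  -- the complement is Fσ (countable union of clopen sets)
  have hPcomplFsigma : ∀ k, IsFsigma {α : ℕ → ℕ | cond α k}ᶜ := by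
    intro k
    refine ⟨fun m => (fun α : ℕ → ℕ => α (Nat.pair (Nat.unpair k).1 m)) ⁻¹'
      {t | ¬ Disjoint (b (Nat.unpair k).2) (b t)}, fun m =>
      (IsClosed.preimage (continuous_apply _) (isClosed_discrete _)), ?_⟩
    ext α
    simp [hcond, not_forall]
  -- fibers of each coordinate map are Fσ
  have hfiber : ∀ k v, IsFsigma {α : ℕ → ℕ | c α k = v} := by
    intro k v
    have heq : {α : ℕ → ℕ | c α k = v} =
        (⋃ _ : (Nat.unpair k).2 = v, {α : ℕ → ℕ | cond α k}) ∪
        (⋃ _ : e = v, {α : ℕ → ℕ | cond α k}ᶜ) := by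
      ext α
      by_cases hca : cond α k
      · simp only [hc, mem_setOf_eq, if_pos hca, mem_union, mem_iUnion, mem_compl_iff]
        constructor
        · intro h; exact Or.inl ⟨h, hca⟩
        · rintro (⟨h, -⟩ | ⟨-, h⟩)
          · exact h
          · exact absurd hca h
      · simp only [hc, mem_setOf_eq, if_neg hca, mem_union, mem_iUnion, mem_compl_iff]
        constructor
        · intro h; exact Or.inr ⟨h, hca⟩
        · rintro (⟨-, h⟩ | ⟨h, -⟩)
          · exact absurd h hca
          · exact h
    rw [heq]
    exact (isFsigma_iUnion_prop (isFsigma_of_isClosed (hPclosed k))).union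
      (isFsigma_iUnion_prop (hPcomplFsigma k))
  refine ⟨c, ?_, ?_⟩
  · -- Σ⁰₂-measurability
    intro V hV
    have hVdecomp := open_eq_iUnion_cyl hV
    have : IsFsigma (c ⁻¹' V) := by
      rw [hVdecomp, preimage_iUnion]
      refine isFsigma_iUnion fun l => ?_
      rw [preimage_iUnion]
      refine isFsigma_iUnion_prop ?_
      rw [cyl_eq, preimage_iInter₂]
      refine isFsigma_biInter_finset _ fun i _ => ?_
      exact hfiber i (l.getD i 0)
    obtain ⟨F, hFc, hFu⟩ := this
    exact ⟨F, hFc, hFu⟩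
  · -- meagre symmetric difference
    intro α
    set U : ℕ → Set X := fun n => ⋃ m, b (α (Nat.pair n m)) with hU
    -- the open set coded by `c α` is exactly `⋃ n, interior (U n)ᶜ`
    have hkey : (⋃ k, b (c α k)) = ⋃ n, interior (U n)ᶜ := by
      apply Subset.antisymm
      · refine iUnion_subset fun k => ?_
        by_cases hca : cond α k
        · have hbc : b (c α k) = b (Nat.unpair k).2 := by
            simp only [hc]; rw [if_pos hca]
          rw [hbc]
          refine subset_iUnion_of_subset (Nat.unpair k).1 ?_
          refine interior_maximal ?_ (hopen _)
          intro x hx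
          simp only [mem_compl_iff]
          intro hxU
          obtain ⟨m, hm⟩ := mem_iUnion.1 hxU
          exact (hca m).ne_of_mem hx hm rfl
        · have hbc : b (c α k) = (∅ : Set X) := by
            simp only [hc]; rw [if_neg hca, he]
          rw [hbc]; exact empty_subset _
      · refine iUnion_subset fun n => ?_
        intro x hx
        obtain ⟨t, ⟨s, rfl⟩, hxt, hts⟩ :=
          hbasis.exists_subset_of_mem_open hx isOpen_interior
        have hsub : b s ⊆ (U n)ᶜ := hts.trans interior_subset
        have hcondk : cond α (Nat.pair n s) := by
          intro m
          rw [Nat.unpair_pair]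
          refine disjoint_left.2 fun y hy hy' => ?_
          exact hsub hy (mem_iUnion.2 ⟨m, hy'⟩)
        refine mem_iUnion.2 ⟨Nat.pair n s, ?_⟩
        have : c α (Nat.pair n s) = s := by
          simp only [hc]; rw [if_pos hcondk, Nat.unpair_pair]
        rw [this]; exact hxt
    rw [hkey]
    -- symmetric difference is contained in union of frontiers
    have hsdsub : (⋃ n, (U n)ᶜ) ∆ (⋃ n, interior (U n)ᶜ) ⊆
        ⋃ n, ((U n)ᶜ \ interior (U n)ᶜ) := by
      have h1 : (⋃ n, interior (U n)ᶜ) ⊆ ⋃ n, (U n)ᶜ :=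
        iUnion_mono fun n => interior_subset
      rw [symmDiff_def]
      refine union_subset ?_ ?_
      · intro x hx
        obtain ⟨hx1, hx2⟩ := hx
        obtain ⟨n, hn⟩ := mem_iUnion.1 hx1
        refine mem_iUnion.2 ⟨n, hn, fun hmem => hx2 (mem_iUnion.2 ⟨n, hmem⟩)⟩
      · intro x hx
        exact absurd (h1 hx.1) hx.2
    refine IsMeagre.mono hsdsub (isMeagre_iUnion fun n => ?_)
    -- each `(U n)ᶜ \ interior (U n)ᶜ` is closed nowhere dense
    have hclosed : IsClosed ((U n)ᶜ \ interior (U n)ᶜ) := by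
      have : (U n)ᶜ \ interior (U n)ᶜ = frontier (U n)ᶜ := by
        rw [frontier, closure_eq_iff_isClosed.2 (isClosed_compl_iff.2 _)]
        exact isOpen_iUnion fun m => hopen _
      rw [this]
      exact isClosed_frontier
    have hnd : IsNowhereDense ((U n)ᶜ \ interior (U n)ᶜ) := by
      rw [hclosed.isNowhereDense_iff]
      rw [eq_empty_iff_forall_notMem]
      intro x hx
      have hx1 : x ∈ (U n)ᶜ \ interior (U n)ᶜ := interior_subset hx
      have : interior ((U n)ᶜ \ interior (U n)ᶜ) ⊆ interior (U n)ᶜ :=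
        interior_mono diff_subset
      exact hx1.2 (this hx)
    rw [isMeagre_iff_countable_union_isNowhereDense]
    exact ⟨{(U n)ᶜ \ interior (U n)ᶜ}, by simpa using hnd, countable_singleton _,
      by simp⟩
end

section
/- Kleene's fixed point theorem for good universal systems of analytic sets: let X be a Polish space, G ⊆ 𝒩 × X, and G₂ ⊆ 𝒩 × (𝒩 × X) an analytic set such that (a) G₂ parametrizes the analytic subsets of 𝒩 × X, i.e. for every analytic A ⊆ 𝒩 × X there exists ε ∈ 𝒩 with A = {(α, x) | (ε, (α, x)) ∈ G₂}; and (b) there is a continuous S : 𝒩 × 𝒩 → 𝒩 such that for all ε, α ∈ 𝒩 and x ∈ X, (ε, (α, x)) ∈ G₂ if and only if (S(ε, α), x) ∈ G. Then for every analytic set A ⊆ 𝒩 × X there exists ε₀ ∈ 𝒩 such that for all x ∈ X, (ε₀, x) ∈ A if and only if (ε₀, x) ∈ G. -/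
open Set MeasureTheory

theorem kleene_fixed_point_analytic
    {X : Type*} [TopologicalSpace X] [PolishSpace X]
    (G : Set ((ℕ → ℕ) × X))
    (G₂ : Set ((ℕ → ℕ) × ((ℕ → ℕ) × X)))
    (hG₂ : AnalyticSet G₂)
    (hparam : ∀ A : Set ((ℕ → ℕ) × X), AnalyticSet A →
      ∃ ε : ℕ → ℕ, A = {p : (ℕ → ℕ) × X | (ε, p) ∈ G₂})
    (hgood : ∃ S : (ℕ → ℕ) × (ℕ → ℕ) → (ℕ → ℕ), Continuous S ∧
      ∀ (ε α : ℕ → ℕ) (x : X), (ε, (α, x)) ∈ G₂ ↔ (S (ε, α), x) ∈ G) :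
    ∀ A : Set ((ℕ → ℕ) × X), AnalyticSet A →
      ∃ ε₀ : ℕ → ℕ, ∀ x : X, (ε₀, x) ∈ A ↔ (ε₀, x) ∈ G := by
  obtain ⟨S, hSc, hS⟩ := hgood
  intro A hA
  set f : ((ℕ → ℕ) × X) → ((ℕ → ℕ) × X) := fun p => (S (p.1, p.1), p.2) with hf
  have hfc : Continuous f := by
    apply Continuous.prodMk
    · exact hSc.comp (continuous_fst.prodMk continuous_fst)
    · exact continuous_snd
  have hB : AnalyticSet (f ⁻¹' A) := hA.preimage hfc
  obtain ⟨ε, hε⟩ := hparam _ hB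
  refine ⟨S (ε, ε), fun x => ?_⟩
  have : (ε, x) ∈ f ⁻¹' A ↔ (ε, (ε, x)) ∈ G₂ := by rw [hε]; rfl
  simpa [f, hS] using this
end

section
/- Let P ⊆ ℕ, let V := {x ∈ 𝒩 | x 0 ∈ P}, and let W ⊆ 𝒩 be an open set such that the symmetric difference V Δ W is meager. Then for every n ∈ ℕ: n ∈ P if and only if the set {x ∈ 𝒩 | x 0 = n} ∩ W is nonempty. -/
open Set
open scoped symmDiff

lemma not_isMeagre_of_isOpen_nonempty {X : Type*} [TopologicalSpace X] [BaireSpace X]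
    {s : Set X} (hs : IsOpen s) (hne : s.Nonempty) : ¬ IsMeagre s := by
  intro h
  have hd : Dense sᶜ := dense_of_mem_residual h
  have : interior s = ∅ := interior_eq_empty_iff_dense_compl.mpr hd
  rw [hs.interior_eq] at this
  exact hne.ne_empty this

theorem mem_iff_section_inter_nonempty
    (P : Set ℕ) (W : Set (ℕ → ℕ)) (hW : IsOpen W)
    (hmeager : IsMeagre ({x : ℕ → ℕ | x 0 ∈ P} ∆ W)) :
    ∀ n : ℕ, n ∈ P ↔ ({x : ℕ → ℕ | x 0 = n} ∩ W).Nonempty := by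
  intro n
  have hSopen : IsOpen {x : ℕ → ℕ | x 0 = n} := by
    have : {x : ℕ → ℕ | x 0 = n} = (fun x : ℕ → ℕ => x 0) ⁻¹' {n} := rfl
    rw [this]
    exact (continuous_apply 0).isOpen_preimage _ (isOpen_discrete _)
  constructor
  · intro hn
    by_contra h
    rw [not_nonempty_iff_eq_empty] at h
    have hsub : {x : ℕ → ℕ | x 0 = n} ⊆ {x : ℕ → ℕ | x 0 ∈ P} ∆ W := by
      intro x hx
      rw [Set.mem_symmDiff]
      left
      refine ⟨by simp [Set.mem_setOf_eq.mp hx, hn], fun hw => ?_⟩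
      have : x ∈ {x : ℕ → ℕ | x 0 = n} ∩ W := ⟨hx, hw⟩
      rw [h] at this
      exact this
    exact not_isMeagre_of_isOpen_nonempty hSopen ⟨fun _ => n, rfl⟩ (hmeager.mono hsub)
  · rintro ⟨x, hxS, hxW⟩
    by_contra hn
    have hsub : {x : ℕ → ℕ | x 0 = n} ∩ W ⊆ {x : ℕ → ℕ | x 0 ∈ P} ∆ W := by
      rintro y ⟨hyS, hyW⟩
      rw [Set.mem_symmDiff]
      right
      exact ⟨hyW, by simp [Set.mem_setOf_eq, Set.mem_setOf_eq.mp hyS, hn]⟩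
    exact not_isMeagre_of_isOpen_nonempty (hSopen.inter hW) ⟨x, hxS, hxW⟩ (hmeager.mono hsub)
end

section
/- No Borel-measurable function can witness the Baire property of analytic sets for all codes: let b : ℕ → Set 𝒩 be a basic open enumeration of 𝒩, let G ⊆ 𝒩 × 𝒩 be analytic, and let G₂ ⊆ 𝒩 × (𝒩 × 𝒩) be an analytic set such that (a) for every analytic A ⊆ 𝒩 × 𝒩 there exists ε ∈ 𝒩 with A = {(α, x) | (ε, (α, x)) ∈ G₂}, and (b) there is a continuous S : 𝒩 × 𝒩 → 𝒩 such that for all ε, α, x ∈ 𝒩, (ε, (α, x)) ∈ G₂ if and only if (S(ε, α), x) ∈ G. Then for every Borel-measurable function f : 𝒩 → 𝒩 there exists α ∈ 𝒩 such that the symmetric difference G_α Δ U_b(f α) is not meager. -/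
open Set MeasureTheory
open scoped symmDiff

theorem no_borel_witness_baire_property_analytic
    (b : ℕ → Set (ℕ → ℕ))
    (hopen : ∀ s, IsOpen (b s))
    (hbasis : TopologicalSpace.IsTopologicalBasis (Set.range b))
    (hempty : (∅ : Set (ℕ → ℕ)) ∈ Set.range b)
    (G : Set ((ℕ → ℕ) × (ℕ → ℕ)))
    (hG : AnalyticSet G)
    (G₂ : Set ((ℕ → ℕ) × ((ℕ → ℕ) × (ℕ → ℕ))))
    (hG₂ : AnalyticSet G₂)
    (hparam : ∀ A : Set ((ℕ → ℕ) × (ℕ → ℕ)), AnalyticSet A →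
      ∃ ε : ℕ → ℕ, A = {p : (ℕ → ℕ) × (ℕ → ℕ) | (ε, p) ∈ G₂})
    (hgood : ∃ S : (ℕ → ℕ) × (ℕ → ℕ) → (ℕ → ℕ), Continuous S ∧
      ∀ ε α x : ℕ → ℕ, (ε, (α, x)) ∈ G₂ ↔ (S (ε, α), x) ∈ G)
    (f : (ℕ → ℕ) → (ℕ → ℕ)) (hf : Measurable f) :
    ∃ α : ℕ → ℕ, ¬ IsMeagre ({x : ℕ → ℕ | (α, x) ∈ G} ∆ (⋃ n, b (f α n))) := by
  obtain ⟨S, hS, hSG⟩ := hgood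
  -- the diagonal set
  set A : Set ((ℕ → ℕ) × (ℕ → ℕ)) :=
    {p | p.2 ∉ ⋃ n, b (f (S (p.1, p.1)) n)} with hA
  have hg : ∀ n : ℕ, Measurable (fun α : ℕ → ℕ => f (S (α, α)) n) := by
    intro n
    exact (measurable_pi_apply n).comp
      (hf.comp (hS.measurable.comp (measurable_id.prodMk measurable_id)))
  have hmeas : MeasurableSet A := by
    have hU : {p : (ℕ → ℕ) × (ℕ → ℕ) | p.2 ∈ ⋃ n, b (f (S (p.1, p.1)) n)} =
        ⋃ n, ⋃ k, ({α : ℕ → ℕ | f (S (α, α)) n = k} ×ˢ b k) := by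
      ext p
      simp only [mem_setOf_eq, mem_iUnion, mem_prod]
      constructor
      · rintro ⟨n, hn⟩
        exact ⟨n, f (S (p.1, p.1)) n, rfl, hn⟩
      · rintro ⟨n, k, hk, hb⟩
        exact ⟨n, hk ▸ hb⟩
    have : MeasurableSet {p : (ℕ → ℕ) × (ℕ → ℕ) | p.2 ∈ ⋃ n, b (f (S (p.1, p.1)) n)} := by
      rw [hU]
      refine MeasurableSet.iUnion fun n => MeasurableSet.iUnion fun k => ?_
      exact ((hg n) (measurableSet_singleton k)).prod (hopen k).measurableSet
    exact this.compl
  haveI : PolishSpace ((ℕ → ℕ) × (ℕ → ℕ)) := inferInstance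
  obtain ⟨ε, hε⟩ := hparam A hmeas.analyticSet
  refine ⟨S (ε, ε), ?_⟩
  have hsec : ∀ x : ℕ → ℕ, x ∉ (⋃ n, b (f (S (ε, ε)) n)) ↔ (S (ε, ε), x) ∈ G := by
    intro x
    have h1 : (ε, x) ∈ A ↔ (ε, (ε, x)) ∈ G₂ := by
      constructor
      · intro h; have := hε ▸ h; exact this
      · intro h; rw [hε]; exact h
    have h2 := hSG ε ε x
    simpa [hA] using h1.trans h2
  have hsymm : ({x : ℕ → ℕ | (S (ε, ε), x) ∈ G} ∆ (⋃ n, b (f (S (ε, ε)) n))) = univ := by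
    ext x
    by_cases hx : x ∈ ⋃ n, b (f (S (ε, ε)) n)
    · have : (S (ε, ε), x) ∉ G := fun h => ((hsec x).mpr h) hx
      simp [symmDiff_def, hx, this]
    · have : (S (ε, ε), x) ∈ G := (hsec x).mp hx
      simp [symmDiff_def, hx, this]
  rw [hsymm]
  intro hmeager
  have : Dense ((univ : Set (ℕ → ℕ))ᶜ) := dense_of_mem_residual hmeager
  rw [compl_univ] at this
  simpa using this.nonempty
end

section
/- No Borel-measurable function can witness the Baire property of co-analytic sets for all codes: let b : ℕ → Set 𝒩 be a basic open enumeration of 𝒩, let G ⊆ 𝒩 × 𝒩 be analytic, and let G₂ ⊆ 𝒩 × (𝒩 × 𝒩) be an analytic set such that (a) for every analytic A ⊆ 𝒩 × 𝒩 there exists ε ∈ 𝒩 with A = {(α, x) | (ε, (α, x)) ∈ G₂}, and (b) there is a continuous S : 𝒩 × 𝒩 → 𝒩 such that for all ε, α, x ∈ 𝒩, (ε, (α, x)) ∈ G₂ if and only if (S(ε, α), x) ∈ G. Then for every Borel-measurable function f : 𝒩 → 𝒩 there exists α ∈ 𝒩 such that the symmetric difference (𝒩 \ G_α) Δ U_b(f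 α) is not meager. -/
open Set MeasureTheory
open scoped symmDiff

private instance aux_polish_prod : PolishSpace ((ℕ → ℕ) × (ℕ → ℕ)) := inferInstance

lemma aux_isMeagre_union {X : Type*} [TopologicalSpace X] {s t : Set X}
    (hs : IsMeagre s) (ht : IsMeagre t) : IsMeagre (s ∪ t) := by
  rw [IsMeagre, compl_union]; exact Filter.inter_mem hs ht

-- aux: in a nonempty Baire space, univ is not meagre; meager open set is empty
lemma aux_not_isMeagre_univ {X : Type*} [TopologicalSpace X] [BaireSpace X] [Nonempty X] :
    ¬ IsMeagre (univ : Set X) := by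
  intro h
  have : Dense ((univ : Set X)ᶜ) := dense_of_mem_residual h
  rw [compl_univ] at this
  exact absurd this.nonempty (by simp [Set.not_nonempty_empty])

lemma aux_open_meagre_empty {X : Type*} [TopologicalSpace X] [BaireSpace X] {U : Set X}
    (hU : IsOpen U) (h : IsMeagre U) : U = ∅ := by
  have hd : Dense Uᶜ := dense_of_mem_residual h
  by_contra hne
  obtain ⟨x, hx⟩ := Set.nonempty_iff_ne_empty.2 hne
  obtain ⟨y, hy, hyc⟩ := hd.inter_open_nonempty U hU ⟨x, hx⟩
  exact hyc hy

theorem no_borel_witness_baire_property_coanalytic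
    (b : ℕ → Set (ℕ → ℕ))
    (hopen : ∀ s, IsOpen (b s))
    (hbasis : TopologicalSpace.IsTopologicalBasis (Set.range b))
    (hempty : (∅ : Set (ℕ → ℕ)) ∈ Set.range b)
    (G : Set ((ℕ → ℕ) × (ℕ → ℕ)))
    (hG : AnalyticSet G)
    (G₂ : Set ((ℕ → ℕ) × ((ℕ → ℕ) × (ℕ → ℕ))))
    (hG₂ : AnalyticSet G₂)
    (hparam : ∀ A : Set ((ℕ → ℕ) × (ℕ → ℕ)), AnalyticSet A →
      ∃ ε : ℕ → ℕ, A = {p : (ℕ → ℕ) × (ℕ → ℕ) | (ε, p) ∈ G₂})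
    (hgood : ∃ S : (ℕ → ℕ) × (ℕ → ℕ) → (ℕ → ℕ), Continuous S ∧
      ∀ ε α x : ℕ → ℕ, (ε, (α, x)) ∈ G₂ ↔ (S (ε, α), x) ∈ G)
    (f : (ℕ → ℕ) → (ℕ → ℕ)) (hf : Measurable f) :
    ∃ α : ℕ → ℕ, ¬ IsMeagre ({x : ℕ → ℕ | (α, x) ∈ G}ᶜ ∆ (⋃ n, b (f α n))) := by
  by_contra hcon
  push_neg at hcon
  obtain ⟨S, hS, hSG⟩ := hgood
  -- the open set coded by f β
  set U : (ℕ → ℕ) → Set (ℕ → ℕ) := fun β => ⋃ n, b (f β n) with hU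
  have hUopen : ∀ β, IsOpen (U β) := fun β => isOpen_iUnion fun n => hopen _
  -- key equivalence: section of G at β is comeager iff U β = ∅
  have key : ∀ β, IsMeagre ({x : ℕ → ℕ | (β, x) ∈ G}ᶜ) ↔ U β = ∅ := by
    intro β
    have hm := hcon β
    constructor
    · intro h
      refine aux_open_meagre_empty (hUopen β) ?_
      have : U β ⊆ ({x : ℕ → ℕ | (β, x) ∈ G}ᶜ ∆ U β) ∪ {x : ℕ → ℕ | (β, x) ∈ G}ᶜ := by
        intro x hx
        by_cases hxG : x ∈ ({x : ℕ → ℕ | (β, x) ∈ G}ᶜ)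
        · exact Or.inr hxG
        · exact Or.inl (Or.inr ⟨hx, hxG⟩)
      exact ((aux_isMeagre_union hm h).mono this)
    · intro h
      have : ({x : ℕ → ℕ | (β, x) ∈ G}ᶜ) ⊆ ({x : ℕ → ℕ | (β, x) ∈ G}ᶜ ∆ U β) := by
        intro x hx
        exact Or.inl ⟨hx, by simp [h]⟩
      exact hm.mono this
  -- so comeagerness of sections is a measurable condition
  have hmeas : ∀ B : Set (ℕ → ℕ), AnalyticSet B → MeasurableSet B := by
    intro B hB
    obtain ⟨ε, hε⟩ := hparam (Prod.fst ⁻¹' B) (hB.preimage continuous_fst)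
    have hBiff : ∀ α, α ∈ B ↔ U (S (ε, α)) = ∅ := by
      intro α
      rw [← key (S (ε, α))]
      constructor
      · intro hα
        have : {x : ℕ → ℕ | (S (ε, α), x) ∈ G}ᶜ = ∅ := by
          ext x
          simp only [mem_compl_iff, mem_setOf_eq, mem_empty_iff_false, iff_false, not_not]
          rw [← hSG]
          have : (α, x) ∈ Prod.fst ⁻¹' B := hα
          rw [hε] at this
          exact this
        rw [this]; exact IsMeagre.empty
      · intro hme
        by_contra hα
        have : {x : ℕ → ℕ | (S (ε, α), x) ∈ G}ᶜ = univ := by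
          ext x
          simp only [mem_compl_iff, mem_setOf_eq, mem_univ, iff_true]
          rw [← hSG]
          intro hmem
          have : (α, x) ∈ Prod.fst ⁻¹' B := by rw [hε]; exact hmem
          exact hα this
        rw [this] at hme
        exact aux_not_isMeagre_univ hme
    have : B = ⋂ n, (fun α => f (S (ε, α)) n) ⁻¹' {k | b k = ∅} := by
      ext α
      simp only [mem_iInter, mem_preimage, mem_setOf_eq]
      rw [hBiff α, hU]
      constructor
      · intro h n
        exact eq_empty_of_subset_empty (h ▸ subset_iUnion (fun n => b (f (S (ε, α)) n)) n)
      · intro h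
        simp only [iUnion_eq_empty]
        exact h
    rw [this]
    exact MeasurableSet.iInter fun n =>
      ((measurable_pi_apply n).comp (hf.comp (hS.measurable.comp
        (measurable_const.prodMk measurable_id)))) (by trivial)
  -- diagonal contradiction
  have hDiag : AnalyticSet ((fun α : ℕ → ℕ => (α, α)) ⁻¹' G) :=
    hG.preimage (continuous_id.prodMk continuous_id)
  have hDc : AnalyticSet (((fun α : ℕ → ℕ => (α, α)) ⁻¹' G)ᶜ) :=
    ((hmeas _ hDiag).compl).analyticSet
  obtain ⟨ε, hε⟩ := hparam (Prod.snd ⁻¹' (((fun α : ℕ → ℕ => (α, α)) ⁻¹' G)ᶜ))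
    (hDc.preimage continuous_snd)
  set α₀ : ℕ → ℕ := fun _ => 0 with hα₀
  set β := S (ε, α₀) with hβ
  have hiff : ∀ x, (x, x) ∉ G ↔ (β, x) ∈ G := by
    intro x
    have h1 : (α₀, x) ∈ Prod.snd ⁻¹' (((fun α : ℕ → ℕ => (α, α)) ⁻¹' G)ᶜ) ↔
        (ε, (α₀, x)) ∈ G₂ := by rw [hε]; exact Iff.rfl
    have h2 : (ε, (α₀, x)) ∈ G₂ ↔ (β, x) ∈ G := hSG ε α₀ x
    simpa [mem_preimage, mem_compl_iff] using h1.trans h2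
  have := hiff β
  tauto
end
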